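/- In the formal power series ring ℤ[[a, b]] in two variables, every coefficient of the series (1 − a)(1 − ab)(1 − b) · [(1 − 2a)(1 − 2ab)(1 − b − ab)]^{−1} is nonnegative. (Each of the three factors 1 − 2a, 1 − 2ab, 1 − b − ab has constant term 1 and hence is invertible in ℤ[[a,b]].) Consequently, all coefficients of the Laurent expansion of the Thom series Tp₃(z₁,z₂,z₃) = (z₁−z₂)(z₁−z₃)(z₂−z₃)/((2z₁−z₂)(z₁+z₂−z₃)(2z₁−z₃)) in the domain |z₁| ≪ |z₂| ≪ |z₃| are nonnegative, i.e. the positivity conjecture for Thom polynomial coefficients of Morin singularities holds for k = 3. -/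

import Mathlib

open MvPowerSeries

def NN (s : MvPowerSeries (Fin 2) ℤ) : Prop := ∀ d, 0 ≤ MvPowerSeries.coeff d s

lemma NN.mul {s t : MvPowerSeries (Fin 2) ℤ} (hs : NN s) (ht : NN t) :
    NN (s * t) := by
  intro d
  rw [MvPowerSeries.coeff_mul]
  exact Finset.sum_nonneg fun p _ => mul_nonneg (hs p.1) (ht p.2)

lemma NN.add {s t : MvPowerSeries (Fin 2) ℤ} (hs : NN s) (ht : NN t) :
    NN (s + t) := fun d => by
  rw [map_add]; exact add_nonneg (hs d) (ht d)

lemma nonneg_one : NN (1 : MvPowerSeries (Fin 2) ℤ) := fun d => by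
  rw [MvPowerSeries.coeff_one]; split <;> norm_num

lemma nonneg_X (i : Fin 2) : NN (MvPowerSeries.X i : MvPowerSeries (Fin 2) ℤ) := fun d => by
  rw [MvPowerSeries.coeff_X]; split <;> norm_num

lemma degree_add (e1 e2 : Fin 2 →₀ ℕ) : (e1 + e2).degree = e1.degree + e2.degree := by
  simp [Finsupp.degree_eq_weight_one, map_add]

lemma geom_nonneg (f : MvPowerSeries (Fin 2) ℤ)
    (hf0 : MvPowerSeries.constantCoeff f = 0) (hf : NN f) :
    NN ((1 - f).invOfUnit 1) := by
  set g := (1 - f).invOfUnit 1 with hg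
  have hmul : (1 - f) * g = 1 := MvPowerSeries.mul_invOfUnit _ 1 (by simp [hf0])
  have hrec : g = 1 + f * g := by linear_combination hmul
  suffices H : ∀ n (d : Fin 2 →₀ ℕ), d.degree = n → 0 ≤ MvPowerSeries.coeff d g by
    exact fun d => H d.degree d rfl
  intro n
  induction n using Nat.strong_induction_on with
  | _ n IH =>
  intro d hd
  rw [hrec, map_add, MvPowerSeries.coeff_mul]
  refine add_nonneg (nonneg_one d) (Finset.sum_nonneg fun p hp => ?_)
  rcases eq_or_ne p.1 0 with h0 | h0
  · have : MvPowerSeries.coeff p.1 f = 0 := by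
      rw [h0]; exact hf0
    simp [this]
  · have hpd : p.1 + p.2 = d := Finset.HasAntidiagonal.mem_antidiagonal.mp hp
    have hlt : p.2.degree < d.degree := by
      rw [← hpd, degree_add]
      have : p.1.degree ≠ 0 := fun h => h0 (by rwa [Finsupp.degree_eq_zero_iff] at h)
      omega
    exact mul_nonneg (hf p.1) (IH p.2.degree (hd ▸ hlt) p.2 rfl)

theorem statement10 (a b : MvPowerSeries (Fin 2) ℤ)
    (ha : a = MvPowerSeries.X 0) (hb : b = MvPowerSeries.X 1) :
    IsUnit ((1 - 2 * a) * (1 - 2 * (a * b)) * (1 - b - a * b)) ∧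
      ∀ h : MvPowerSeries (Fin 2) ℤ,
        (1 - 2 * a) * (1 - 2 * (a * b)) * (1 - b - a * b) * h = 1 →
          ∀ d : Fin 2 →₀ ℕ,
            0 ≤ MvPowerSeries.coeff d ((1 - a) * (1 - a * b) * (1 - b) * h) := by
  have hNa : NN a := ha ▸ nonneg_X 0
  have hNb : NN b := hb ▸ nonneg_X 1
  have hN2 : NN (2 : MvPowerSeries (Fin 2) ℤ) := by
    have := nonneg_one.add nonneg_one
    rwa [one_add_one_eq_two] at this
  have hca : MvPowerSeries.constantCoeff a = 0 := by simp [ha]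
  have hcb : MvPowerSeries.constantCoeff b = 0 := by simp [hb]
  set f1 : MvPowerSeries (Fin 2) ℤ := 2 * a with hf1
  set f2 : MvPowerSeries (Fin 2) ℤ := 2 * (a * b) with hf2
  set f3 : MvPowerSeries (Fin 2) ℤ := b + a * b with hf3
  have hNf1 : NN f1 := hN2.mul hNa
  have hNf2 : NN f2 := hN2.mul (hNa.mul hNb)
  have hNf3 : NN f3 := hNb.add (hNa.mul hNb)
  have hcf1 : MvPowerSeries.constantCoeff f1 = 0 := by simp [hf1, hca]
  have hcf2 : MvPowerSeries.constantCoeff f2 = 0 := by simp [hf2, hca]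
  have hcf3 : MvPowerSeries.constantCoeff f3 = 0 := by simp [hf3, hca, hcb]
  set g1 := (1 - f1).invOfUnit 1 with hg1
  set g2 := (1 - f2).invOfUnit 1 with hg2
  set g3 := (1 - f3).invOfUnit 1 with hg3
  have hm1 : (1 - f1) * g1 = 1 := MvPowerSeries.mul_invOfUnit _ 1 (by simp [hcf1])
  have hm2 : (1 - f2) * g2 = 1 := MvPowerSeries.mul_invOfUnit _ 1 (by simp [hcf2])
  have hm3 : (1 - f3) * g3 = 1 := MvPowerSeries.mul_invOfUnit _ 1 (by simp [hcf3])
  have key : (1 - 2 * a) * (1 - 2 * (a * b)) * (1 - b - a * b) * (g1 * g2 * g3) = 1 := by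
    have e1 : (1 - 2 * a) = 1 - f1 := rfl
    have e2 : (1 - 2 * (a * b)) = 1 - f2 := rfl
    have e3 : (1 - b - a * b) = 1 - f3 := by rw [hf3]; ring
    rw [e1, e2, e3]
    calc (1 - f1) * (1 - f2) * (1 - f3) * (g1 * g2 * g3)
        = ((1 - f1) * g1) * ((1 - f2) * g2) * ((1 - f3) * g3) := by ring
      _ = 1 := by rw [hm1, hm2, hm3]; ring
  refine ⟨IsUnit.of_mul_eq_one _ key, fun h hh d => ?_⟩
  have huniq : h = g1 * g2 * g3 := by
    calc h = ((1 - 2 * a) * (1 - 2 * (a * b)) * (1 - b - a * b) * (g1 * g2 * g3)) * h := by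
          rw [key]; ring
      _ = ((1 - 2 * a) * (1 - 2 * (a * b)) * (1 - b - a * b) * h) * (g1 * g2 * g3) := by ring
      _ = g1 * g2 * g3 := by rw [hh]; ring
  have hq1 : (1 - a) * g1 = 1 + a * g1 := by
    have : (1 - a) * g1 = (1 - f1) * g1 + a * g1 := by rw [hf1]; ring
    rw [this, hm1]
  have hq2 : (1 - a * b) * g2 = 1 + (a * b) * g2 := by
    have : (1 - a * b) * g2 = (1 - f2) * g2 + (a * b) * g2 := by rw [hf2]; ring
    rw [this, hm2]
  have hq3 : (1 - b) * g3 = 1 + (a * b) * g3 := by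
    have : (1 - b) * g3 = (1 - f3) * g3 + (a * b) * g3 := by rw [hf3]; ring
    rw [this, hm3]
  have hfin : (1 - a) * (1 - a * b) * (1 - b) * h
      = ((1 - a) * g1) * ((1 - a * b) * g2) * ((1 - b) * g3) := by rw [huniq]; ring
  rw [hfin, hq1, hq2, hq3]
  exact (((nonneg_one.add (hNa.mul (geom_nonneg _ hcf1 hNf1))).mul
    (nonneg_one.add ((hNa.mul hNb).mul (geom_nonneg _ hcf2 hNf2)))).mul
    (nonneg_one.add ((hNa.mul hNb).mul (geom_nonneg _ hcf3 hNf3)))) d
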